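/- arXiv:2005.01045 — 3 statements merged into one kernel-verified Lean document; each statement's English description precedes it below -/
import Mathlib

section
/- Suppose for every s ∈ S the code C_s is ρ-locally testable with respect to sampling t ⊆ s, and the distribution of t obtained by first sampling s and then t ⊆ s equals the marginal distribution on T. If a word w_0 : V → Σ satisfies Pr_{t∈T}[w_0|_t ∉ C_t] = ε, then E_{s∈S}[dist(w_0|_s, C_s)] ≤ ε/ρ. -/
open Finset
open scoped Classical

/-- Normalized Hamming distance on the coordinates in a finite set `s`,
between two (globally represented) functions. -/
noncomputable def hamDist {V Γ : Type*} (s : Finset V) (f g : V → Γ) : ℝ :=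
  ((s.filter fun v => f v ≠ g v).card : ℝ) / s.card

/-- Distance from a word to a code (the codewords being globally represented),
measured on the coordinates of `s`. -/
noncomputable def distToCode {V Γ : Type*} (s : Finset V) (f : V → Γ)
    (C : Set (V → Γ)) : ℝ :=
  sInf ((fun g => hamDist s f g) '' C)

/-- The real-valued indicator of a proposition. -/
noncomputable def ind (P : Prop) : ℝ := if P then 1 else 0

/-- Suppose for every `s ∈ S` the code `C_s` is `ρ`-locally testable with respect to
sampling `t ⊆ s` (conditional distribution `ν s`), and the distribution of `t` obtained
by first sampling `s ∼ μ` and then `t ∼ ν s` equals the marginal distribution `μT` on `T`.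
If a word `w₀ : V → Γ` satisfies `Pr_{t∈T}[w₀|_t ∉ C_t] = ε`
(where `Fails t f` means `f|_t ∉ C_t`), then `E_{s∈S}[dist(w₀|_s, C_s)] ≤ ε/ρ`. -/
theorem stmt2 {V Γ : Type*} (S T : Finset (Finset V))
    (μ : Finset V → ℝ) (ν : Finset V → Finset V → ℝ)
    (Cs : Finset V → Set (V → Γ))
    (Fails : Finset V → (V → Γ) → Prop)
    (ρ ε : ℝ) (hρ : 0 < ρ)
    (hμ0 : ∀ s ∈ S, 0 ≤ μ s) (hμ1 : ∑ s ∈ S, μ s = 1)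
    (hν0 : ∀ s ∈ S, ∀ t ∈ T, 0 ≤ ν s t)
    (hν1 : ∀ s ∈ S, ∑ t ∈ T, ν s t = 1)
    (hνsupp : ∀ s ∈ S, ∀ t ∈ T, ν s t ≠ 0 → t ⊆ s)
    (μT : Finset V → ℝ)
    (hμT : ∀ t ∈ T, μT t = ∑ s ∈ S, μ s * ν s t)
    (hLT : ∀ s ∈ S, ∀ f : V → Γ,
      ρ * distToCode s f (Cs s) ≤ ∑ t ∈ T, ν s t * ind (Fails t f))
    (w₀ : V → Γ)
    (hε : ∑ t ∈ T, μT t * ind (Fails t w₀) = ε) :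
    ∑ s ∈ S, μ s * distToCode s w₀ (Cs s) ≤ ε / ρ := by
  have h1 : ∑ s ∈ S, μ s * distToCode s w₀ (Cs s)
      ≤ ∑ s ∈ S, μ s * ((∑ t ∈ T, ν s t * ind (Fails t w₀)) / ρ) := by
    apply Finset.sum_le_sum
    intro s hs
    apply mul_le_mul_of_nonneg_left _ (hμ0 s hs)
    rw [le_div_iff₀ hρ, mul_comm]
    exact hLT s hs w₀
  refine h1.trans (le_of_eq ?_)
  rw [← hε, Finset.sum_div]
  have : ∀ s ∈ S, μ s * ((∑ t ∈ T, ν s t * ind (Fails t w₀)) / ρ)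
      = (∑ t ∈ T, μ s * ν s t * ind (Fails t w₀)) / ρ := by
    intro s hs
    rw [mul_div_assoc', Finset.mul_sum]
    ring_nf
  rw [Finset.sum_congr rfl this, ← Finset.sum_div, Finset.sum_comm, Finset.sum_div]
  apply Finset.sum_congr rfl
  intro t ht
  rw [hμT t ht, Finset.sum_mul]
end

section
/- Let {f_s}_{s∈S} be an ensemble where f_s ∈ C_s is a closest codeword to w_0|_s, and suppose E_s[dist(w_0|_s, f_s)] ≤ ε/ρ, where dist(w_0|_s, f_s) = E_{k⊆s}[dist(w_0|_k, f_s|_k)] under the Markov chain. If for every k ∈ K the code C_k has relative distance δ, then Pr_{{s_1,s_2}_k ∼ A}[f_{s_1}|_k = f_{s_2}|_k] ≥ 1 − 4ε/(ρδ), where the agreement test A samples k and then s_1, s_2 ⊇ k independently. -/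
open Finset
open scoped Classical

lemma hamDist_nonneg {V Γ : Type*} (s : Finset V) (f g : V → Γ) :
    0 ≤ hamDist s f g :=
  div_nonneg (Nat.cast_nonneg _) (Nat.cast_nonneg _)

lemma hamDist_comm {V Γ : Type*} (s : Finset V) (f g : V → Γ) :
    hamDist s f g = hamDist s g f := by
  have : (s.filter fun v => f v ≠ g v) = s.filter fun v => g v ≠ f v :=
    Finset.filter_congr fun v _ => by constructor <;> exact Ne.symm
  unfold hamDist
  rw [this]

lemma hamDist_triangle {V Γ : Type*} (s : Finset V) (f g h : V → Γ) :
    hamDist s f h ≤ hamDist s f g + hamDist s g h := by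
  unfold hamDist
  rcases eq_or_lt_of_le (Nat.cast_nonneg (α := ℝ) s.card) with hc | hc
  · simp [← hc]
  · rw [← add_div, div_le_div_iff_of_pos_right hc]
    have hsub : (s.filter fun v => f v ≠ h v) ⊆
        (s.filter fun v => f v ≠ g v) ∪ (s.filter fun v => g v ≠ h v) := by
      intro v hv
      simp only [Finset.mem_filter, Finset.mem_union] at hv ⊢
      by_cases hfg : f v = g v
      · exact Or.inr ⟨hv.1, fun hgh => hv.2 (hfg.trans hgh)⟩
      · exact Or.inl ⟨hv.1, hfg⟩
    have := (Finset.card_le_card hsub).trans (Finset.card_union_le _ _)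
    exact_mod_cast this

/-- Let `{f_s}` be an ensemble of local codewords (`f_s ∈ C_s`, globally represented,
so `f_s|_k ∈ C_k` whenever `k ⊆ s`), and suppose
`E_s[dist(w₀|_s, f_s)] = E_{k,s}[dist(w₀|_k, f_s|_k)] ≤ ε/ρ`, the expectation taken
over the Markov chain sampling `k ∈ K` (weights `μK`) and then `s ⊇ k` (weights `ν k`).
If every `C_k` has relative distance `δ`, then the agreement test — sampling `k` and then
two conditionally independent `s₁, s₂ ⊇ k` — passes with probability at least
`1 − 4ε/(ρδ)`. -/
theorem stmt3 {V Γ : Type*} (K S : Finset (Finset V))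
    (μK : Finset V → ℝ) (ν : Finset V → Finset V → ℝ)
    (Ck : Finset V → Set (V → Γ))
    (f : Finset V → V → Γ) (w₀ : V → Γ)
    (ρ δ ε : ℝ) (hρ : 0 < ρ) (hδ : 0 < δ) (hε : 0 ≤ ε)
    (hμ0 : ∀ k ∈ K, 0 ≤ μK k) (hμ1 : ∑ k ∈ K, μK k = 1)
    (hν0 : ∀ k ∈ K, ∀ s ∈ S, 0 ≤ ν k s)
    (hν1 : ∀ k ∈ K, ∑ s ∈ S, ν k s = 1)
    (hνsupp : ∀ k ∈ K, ∀ s ∈ S, ν k s ≠ 0 → k ⊆ s)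
    -- the local codewords restrict to codewords of `C_k`
    (hmem : ∀ k ∈ K, ∀ s ∈ S, k ⊆ s → f s ∈ Ck k)
    -- `C_k` has relative distance `δ`
    (hdist : ∀ k ∈ K, ∀ g h : V → Γ, g ∈ Ck k → h ∈ Ck k →
      (¬ ∀ v ∈ k, g v = h v) → δ ≤ hamDist k g h)
    -- `E_{k,s}[dist(w₀|_k, f_s|_k)] ≤ ε/ρ`
    (hexp : ∑ k ∈ K, ∑ s ∈ S, μK k * ν k s * hamDist k w₀ (f s) ≤ ε / ρ) :
    1 - 4 * ε / (ρ * δ) ≤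
      ∑ k ∈ K, ∑ s₁ ∈ S, ∑ s₂ ∈ S,
        μK k * ν k s₁ * ν k s₂ * ind (∀ v ∈ k, f s₁ v = f s₂ v) := by
  classical
  set P : ℝ := ∑ k ∈ K, ∑ s₁ ∈ S, ∑ s₂ ∈ S,
      μK k * ν k s₁ * ν k s₂ * ind (∀ v ∈ k, f s₁ v = f s₂ v) with hP
  -- total mass is 1
  have hTot : ∑ k ∈ K, ∑ s₁ ∈ S, ∑ s₂ ∈ S, μK k * ν k s₁ * ν k s₂ = 1 := by
    rw [← hμ1]
    refine Finset.sum_congr rfl fun k hk => ?_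
    calc ∑ s₁ ∈ S, ∑ s₂ ∈ S, μK k * ν k s₁ * ν k s₂
        = ∑ s₁ ∈ S, μK k * ν k s₁ := by
          refine Finset.sum_congr rfl fun s₁ _ => ?_
          rw [← Finset.mul_sum, hν1 k hk, mul_one]
      _ = μK k := by rw [← Finset.mul_sum, hν1 k hk, mul_one]
  -- the doubled expected distance
  have hRHS : ∑ k ∈ K, ∑ s₁ ∈ S, ∑ s₂ ∈ S,
      μK k * ν k s₁ * ν k s₂ * (hamDist k w₀ (f s₁) + hamDist k w₀ (f s₂))
      = 2 * ∑ k ∈ K, ∑ s ∈ S, μK k * ν k s * hamDist k w₀ (f s) := by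
    rw [Finset.mul_sum]
    refine Finset.sum_congr rfl fun k hk => ?_
    have h1 : ∑ s₁ ∈ S, ∑ s₂ ∈ S,
        μK k * ν k s₁ * ν k s₂ * hamDist k w₀ (f s₁)
        = ∑ s ∈ S, μK k * ν k s * hamDist k w₀ (f s) := by
      refine Finset.sum_congr rfl fun s₁ _ => ?_
      have : ∀ s₂ ∈ S, μK k * ν k s₁ * ν k s₂ * hamDist k w₀ (f s₁)
          = μK k * ν k s₁ * hamDist k w₀ (f s₁) * ν k s₂ := fun s₂ _ => by ring
      rw [Finset.sum_congr rfl this, ← Finset.mul_sum, hν1 k hk]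
      ring
    have h2 : ∑ s₁ ∈ S, ∑ s₂ ∈ S,
        μK k * ν k s₁ * ν k s₂ * hamDist k w₀ (f s₂)
        = ∑ s ∈ S, μK k * ν k s * hamDist k w₀ (f s) := by
      rw [Finset.sum_comm]
      refine Finset.sum_congr rfl fun s₂ _ => ?_
      have : ∀ s₁ ∈ S, μK k * ν k s₁ * ν k s₂ * hamDist k w₀ (f s₂)
          = μK k * ν k s₂ * hamDist k w₀ (f s₂) * ν k s₁ := fun s₁ _ => by ring
      rw [Finset.sum_congr rfl this, ← Finset.mul_sum, hν1 k hk]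
      ring
    calc ∑ s₁ ∈ S, ∑ s₂ ∈ S,
        μK k * ν k s₁ * ν k s₂ * (hamDist k w₀ (f s₁) + hamDist k w₀ (f s₂))
        = (∑ s₁ ∈ S, ∑ s₂ ∈ S, μK k * ν k s₁ * ν k s₂ * hamDist k w₀ (f s₁))
          + ∑ s₁ ∈ S, ∑ s₂ ∈ S, μK k * ν k s₁ * ν k s₂ * hamDist k w₀ (f s₂) := by
          rw [← Finset.sum_add_distrib]
          refine Finset.sum_congr rfl fun s₁ _ => ?_
          rw [← Finset.sum_add_distrib]
          exact Finset.sum_congr rfl fun s₂ _ => by ring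
      _ = 2 * ∑ s ∈ S, μK k * ν k s * hamDist k w₀ (f s) := by
          rw [h1, h2]; ring
  -- pointwise key bound
  have key : ∀ k ∈ K, ∀ s₁ ∈ S, ∀ s₂ ∈ S,
      μK k * ν k s₁ * ν k s₂ * (δ * (1 - ind (∀ v ∈ k, f s₁ v = f s₂ v)))
      ≤ μK k * ν k s₁ * ν k s₂ * (hamDist k w₀ (f s₁) + hamDist k w₀ (f s₂)) := by
    intro k hk s₁ hs₁ s₂ hs₂
    have hw : 0 ≤ μK k * ν k s₁ * ν k s₂ :=
      mul_nonneg (mul_nonneg (hμ0 k hk) (hν0 k hk s₁ hs₁)) (hν0 k hk s₂ hs₂)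
    by_cases hag : ∀ v ∈ k, f s₁ v = f s₂ v
    · simp only [ind, if_pos hag, sub_self, mul_zero]
      exact mul_nonneg hw (add_nonneg (hamDist_nonneg _ _ _) (hamDist_nonneg _ _ _))
    · simp only [ind, if_neg hag, sub_zero, mul_one]
      rcases eq_or_ne (ν k s₁) 0 with h1 | h1
      · simp [h1]
      rcases eq_or_ne (ν k s₂) 0 with h2 | h2
      · simp [h2]
      have hm1 := hmem k hk s₁ hs₁ (hνsupp k hk s₁ hs₁ h1)
      have hm2 := hmem k hk s₂ hs₂ (hνsupp k hk s₂ hs₂ h2)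
      have hdd : δ ≤ hamDist k w₀ (f s₁) + hamDist k w₀ (f s₂) := by
        calc δ ≤ hamDist k (f s₁) (f s₂) := hdist k hk _ _ hm1 hm2 hag
          _ ≤ hamDist k (f s₁) w₀ + hamDist k w₀ (f s₂) := hamDist_triangle _ _ _ _
          _ = hamDist k w₀ (f s₁) + hamDist k w₀ (f s₂) := by rw [hamDist_comm]
      exact mul_le_mul_of_nonneg_left hdd hw
  -- sum the key bound
  have hsum : δ * (1 - P) ≤ 2 * (ε / ρ) := by
    have hL : ∑ k ∈ K, ∑ s₁ ∈ S, ∑ s₂ ∈ S,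
        μK k * ν k s₁ * ν k s₂ * (δ * (1 - ind (∀ v ∈ k, f s₁ v = f s₂ v)))
        = δ * (1 - P) := by
      have expand : ∀ k ∈ K, ∀ s₁ ∈ S, ∀ s₂ ∈ S,
          μK k * ν k s₁ * ν k s₂ * (δ * (1 - ind (∀ v ∈ k, f s₁ v = f s₂ v)))
          = δ * (μK k * ν k s₁ * ν k s₂)
            - δ * (μK k * ν k s₁ * ν k s₂ * ind (∀ v ∈ k, f s₁ v = f s₂ v)) :=
        fun k _ s₁ _ s₂ _ => by ring
      calc ∑ k ∈ K, ∑ s₁ ∈ S, ∑ s₂ ∈ S,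
          μK k * ν k s₁ * ν k s₂ * (δ * (1 - ind (∀ v ∈ k, f s₁ v = f s₂ v)))
          = ∑ k ∈ K, ∑ s₁ ∈ S, ∑ s₂ ∈ S,
            (δ * (μK k * ν k s₁ * ν k s₂)
              - δ * (μK k * ν k s₁ * ν k s₂ * ind (∀ v ∈ k, f s₁ v = f s₂ v))) := by
            refine Finset.sum_congr rfl fun k hk => Finset.sum_congr rfl fun s₁ hs₁ =>
              Finset.sum_congr rfl fun s₂ hs₂ => expand k hk s₁ hs₁ s₂ hs₂
        _ = δ * (∑ k ∈ K, ∑ s₁ ∈ S, ∑ s₂ ∈ S, μK k * ν k s₁ * ν k s₂) - δ * P := by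
            simp only [Finset.sum_sub_distrib, ← Finset.mul_sum, hP]
        _ = δ * (1 - P) := by rw [hTot]; ring
    have hle : ∑ k ∈ K, ∑ s₁ ∈ S, ∑ s₂ ∈ S,
        μK k * ν k s₁ * ν k s₂ * (δ * (1 - ind (∀ v ∈ k, f s₁ v = f s₂ v)))
        ≤ ∑ k ∈ K, ∑ s₁ ∈ S, ∑ s₂ ∈ S,
          μK k * ν k s₁ * ν k s₂ * (hamDist k w₀ (f s₁) + hamDist k w₀ (f s₂)) :=
      Finset.sum_le_sum fun k hk => Finset.sum_le_sum fun s₁ hs₁ =>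
        Finset.sum_le_sum fun s₂ hs₂ => key k hk s₁ hs₁ s₂ hs₂
    calc δ * (1 - P) = _ := hL.symm
      _ ≤ _ := hle
      _ = 2 * ∑ k ∈ K, ∑ s ∈ S, μK k * ν k s * hamDist k w₀ (f s) := hRHS
      _ ≤ 2 * (ε / ρ) := by linarith
  -- conclude
  have h2 : 1 - P ≤ 2 * ε / (ρ * δ) := by
    rw [le_div_iff₀ (by positivity)]
    have h := mul_le_mul_of_nonneg_left hsum (le_of_lt hρ)
    calc (1 - P) * (ρ * δ) = ρ * (δ * (1 - P)) := by ring
      _ ≤ ρ * (2 * (ε / ρ)) := h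
      _ = 2 * ε := by field_simp
  have h4 : (0:ℝ) ≤ 2 * ε / (ρ * δ) := by positivity
  have h3 : 2 * ε / (ρ * δ) ≤ 4 * ε / (ρ * δ) := by
    have : 4 * ε / (ρ * δ) = 2 * ε / (ρ * δ) + 2 * ε / (ρ * δ) := by ring
    linarith
  linarith
end

section
/- Let (V, T, K, S) satisfy: the containment graph between K and T is a λ-sampler (with the Markov chain edge distribution), and let w_1 : V → Σ and an ensemble {f_s} be such that Pr_{k⊆s}[w_1|_k = f_s|_k] ≥ 1 − 8ε/(ρδα), with 8ε/(ρδα) ≤ 1/2. Suppose further that whenever w_1|_t ∉ C_t for t ∈ T, every k ∈ K containing t satisfies w_1|_k ≠ f_s|_k for all s ⊇ k. If λ ≤ ρδα/64 then Pr_{t∈T}[w_1|_t ∉ C_t] ≤ ε/2. -/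
open Finset
open scoped Classical

/-- Let `(V, T, K, S)` carry a joint distribution `μ` sampling `(t, k, s)` with
`t ⊆ k ⊆ s` (the Markov chain marginal), such that the containment graph between `K`
and `T` (with the induced `(t,k)` edge distribution) is a `λ`-sampler.  Let `w₁ : V → Γ`
and an ensemble `{f_s}` satisfy `Pr_{k⊆s}[w₁|_k = f_s|_k] ≥ 1 − 8ε/(ρδα)`, with
`8ε/(ρδα) ≤ 1/2`.  Suppose further that whenever `w₁|_t ∉ C_t` (predicate `Fails t w₁`)
for `t ∈ T`, every `k ∈ K` containing `t` satisfies `w₁|_k ≠ f_s|_k` for all `s ∈ S`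
with `s ⊇ k`.  If `λ ≤ ρδα/64` then `Pr_{t∈T}[w₁|_t ∉ C_t] ≤ ε/2`. -/
theorem stmt7 {V Γ : Type*} (T K S : Finset (Finset V))
    (μ : Finset V → Finset V → Finset V → ℝ)
    (Fails : Finset V → (V → Γ) → Prop)
    (f : Finset V → V → Γ) (w₁ : V → Γ)
    (lam ε ρ δ α : ℝ) (hε : 0 ≤ ε) (hρ : 0 < ρ) (hδ : 0 < δ) (hα : 0 < α)
    (hlam : 0 ≤ lam) (hlamle : lam ≤ ρ * δ * α / 64)
    (hμ0 : ∀ t k s, 0 ≤ μ t k s)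
    (hμ1 : ∑ t ∈ T, ∑ k ∈ K, ∑ s ∈ S, μ t k s = 1)
    (hμsupp : ∀ t k s, μ t k s ≠ 0 → t ∈ T ∧ k ∈ K ∧ s ∈ S ∧ t ⊆ k ∧ k ⊆ s)
    -- the containment graph of `K` vs `T` is a `λ`-sampler
    (hsampler : ∀ B ⊆ K, ∀ θ : ℝ, 0 < θ →
      ∑ t ∈ T, (∑ k ∈ K, ∑ s ∈ S, μ t k s) *
          ind ((∑ k ∈ B, ∑ s ∈ S, μ t k s) >
            (∑ k ∈ K, ∑ s ∈ S, μ t k s) *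
              ((∑ t' ∈ T, ∑ k ∈ B, ∑ s ∈ S, μ t' k s) + θ))
        ≤ lam / θ ^ 2 * (∑ t' ∈ T, ∑ k ∈ B, ∑ s ∈ S, μ t' k s))
    -- `Pr_{k ⊆ s}[w₁|_k = f_s|_k] ≥ 1 − 8ε/(ρδα)`
    (hagree : 1 - 8 * ε / (ρ * δ * α) ≤
      ∑ k ∈ K, ∑ s ∈ S, (∑ t ∈ T, μ t k s) * ind (∀ v ∈ k, w₁ v = f s v))
    (hhalf : 8 * ε / (ρ * δ * α) ≤ 1 / 2)
    -- a failing `t` has all of the `k ⊇ t` disagreeing with every `f_s`, `s ⊇ k`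
    (hbad : ∀ t ∈ T, Fails t w₁ → ∀ k ∈ K, t ⊆ k → ∀ s ∈ S, k ⊆ s →
      ¬ ∀ v ∈ k, w₁ v = f s v) :
    ∑ t ∈ T, (∑ k ∈ K, ∑ s ∈ S, μ t k s) * ind (Fails t w₁) ≤ ε / 2 := by
  set q : ℝ := 8 * ε / (ρ * δ * α) with hq
  set B : Finset (Finset V) := K.filter (fun k => ∀ s ∈ S, k ⊆ s → ¬ ∀ v ∈ k, w₁ v = f s v) with hB
  have hBK : B ⊆ K := filter_subset _ _
  set PB : ℝ := ∑ t' ∈ T, ∑ k ∈ B, ∑ s ∈ S, μ t' k s with hPB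
  -- PB ≥ 0
  have hPB0 : 0 ≤ PB := by
    apply Finset.sum_nonneg; intro t _; apply Finset.sum_nonneg; intro k _
    exact Finset.sum_nonneg fun s _ => hμ0 t k s
  -- Step 1 : PB ≤ q
  have hPBq : PB ≤ q := by
    have hzero : ∀ k ∈ B, ∑ s ∈ S, (∑ t ∈ T, μ t k s) * ind (∀ v ∈ k, w₁ v = f s v) = 0 := by
      intro k hk
      apply Finset.sum_eq_zero; intro s hs
      rcases Finset.mem_filter.mp hk with ⟨hkK, hkprop⟩
      by_cases hag : ∀ v ∈ k, w₁ v = f s v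
      · have : ∑ t ∈ T, μ t k s = 0 := by
          apply Finset.sum_eq_zero; intro t _
          by_contra hne
          exact hkprop s hs (hμsupp t k s hne).2.2.2.2 hag
        simp [this]
      · simp [ind, hag]
    have hsplit : ∑ k ∈ K, ∑ s ∈ S, (∑ t ∈ T, μ t k s) * ind (∀ v ∈ k, w₁ v = f s v)
        ≤ ∑ k ∈ K \ B, ∑ s ∈ S, ∑ t ∈ T, μ t k s := by
      rw [← Finset.sum_sdiff hBK]
      have h1 : ∑ k ∈ B, ∑ s ∈ S, (∑ t ∈ T, μ t k s) * ind (∀ v ∈ k, w₁ v = f s v) = 0 :=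
        Finset.sum_eq_zero hzero
      rw [h1, add_zero]
      apply Finset.sum_le_sum; intro k _
      apply Finset.sum_le_sum; intro s _
      have h2 : 0 ≤ ∑ t ∈ T, μ t k s := Finset.sum_nonneg fun t _ => hμ0 t k s
      have h3 : ind (∀ v ∈ k, w₁ v = f s v) ≤ 1 := by unfold ind; split <;> norm_num
      nlinarith [h2, h3]
    have htot : ∑ k ∈ K, ∑ s ∈ S, ∑ t ∈ T, μ t k s = 1 := by
      calc ∑ k ∈ K, ∑ s ∈ S, ∑ t ∈ T, μ t k s
          = ∑ k ∈ K, ∑ t ∈ T, ∑ s ∈ S, μ t k s :=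
            Finset.sum_congr rfl fun k _ => Finset.sum_comm
        _ = ∑ t ∈ T, ∑ k ∈ K, ∑ s ∈ S, μ t k s := Finset.sum_comm
        _ = 1 := hμ1
    have hPB' : PB = ∑ k ∈ B, ∑ s ∈ S, ∑ t ∈ T, μ t k s := by
      rw [hPB]
      calc ∑ t' ∈ T, ∑ k ∈ B, ∑ s ∈ S, μ t' k s
          = ∑ k ∈ B, ∑ t' ∈ T, ∑ s ∈ S, μ t' k s := Finset.sum_comm
        _ = ∑ k ∈ B, ∑ s ∈ S, ∑ t ∈ T, μ t k s :=
            Finset.sum_congr rfl fun k _ => Finset.sum_comm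
    have hsd : ∑ k ∈ K \ B, ∑ s ∈ S, ∑ t ∈ T, μ t k s = 1 - PB := by
      have := Finset.sum_sdiff (f := fun k => ∑ s ∈ S, ∑ t ∈ T, μ t k s) hBK
      rw [htot] at this
      rw [hPB']; linarith
    rw [hsd] at hsplit
    linarith [le_trans hagree hsplit]
  have hPBhalf : PB ≤ 1 / 2 := le_trans hPBq hhalf
  -- Step 2/3 : for 0 < η < 1 - PB, the main sum is bounded
  set LHS : ℝ := ∑ t ∈ T, (∑ k ∈ K, ∑ s ∈ S, μ t k s) * ind (Fails t w₁) with hLHS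
  have key : ∀ η : ℝ, 0 < η → η < 1 - PB → LHS ≤ lam / (1 - PB - η) ^ 2 * PB := by
    intro η hη1 hη2
    have hθ : (0:ℝ) < 1 - PB - η := by linarith
    have hsamp := hsampler B hBK (1 - PB - η) hθ
    refine le_trans ?_ hsamp
    apply Finset.sum_le_sum
    intro t ht
    set p : ℝ := ∑ k ∈ K, ∑ s ∈ S, μ t k s with hp
    have hp0 : 0 ≤ p := Finset.sum_nonneg fun k _ => Finset.sum_nonneg fun s _ => hμ0 t k s
    by_cases hF : Fails t w₁
    · rcases eq_or_lt_of_le hp0 with hpe | hpl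
      · simp [← hpe]
      · -- all neighbor mass of t is in B
        have hall : ∑ k ∈ B, ∑ s ∈ S, μ t k s = p := by
          rw [hp, ← Finset.sum_sdiff hBK]
          have : ∑ k ∈ K \ B, ∑ s ∈ S, μ t k s = 0 := by
            apply Finset.sum_eq_zero; intro k hk
            apply Finset.sum_eq_zero; intro s _
            by_contra hne
            obtain ⟨htT, hkK, hsS, htk, hks⟩ := hμsupp t k s hne
            have hkB : k ∈ B := Finset.mem_filter.mpr ⟨hkK, fun s' hs' hks' => hbad t htT hF k hkK htk s' hs' hks'⟩
            exact (Finset.mem_sdiff.mp hk).2 hkB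
          rw [this, zero_add]
        have hcond : (∑ k ∈ B, ∑ s ∈ S, μ t k s) > p * (PB + (1 - PB - η)) := by
          rw [hall]
          have : PB + (1 - PB - η) = 1 - η := by ring
          rw [this]
          nlinarith
        simp only [ind, hF, hcond, if_true]
        exact mul_le_mul_of_nonneg_left (le_of_eq (if_pos hcond).symm) hp0
    · have : ind (Fails t w₁) = 0 := by simp [ind, hF]
      rw [this, mul_zero]
      apply mul_nonneg hp0
      unfold ind; split <;> norm_num
  -- Step 4 : take η → 0
  have hlim : LHS ≤ lam / (1 - PB) ^ 2 * PB := by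
    have hne : (1:ℝ) - PB > 0 := by linarith
    have hcont : ContinuousAt (fun η : ℝ => lam / (1 - PB - η) ^ 2 * PB) 0 := by
      apply ContinuousAt.mul _ continuousAt_const
      apply ContinuousAt.div continuousAt_const
      · fun_prop
      · simp; positivity
    have htend : Filter.Tendsto (fun η : ℝ => lam / (1 - PB - η) ^ 2 * PB)
        (nhdsWithin 0 (Set.Ioi 0)) (nhds (lam / (1 - PB) ^ 2 * PB)) := by
      have := hcont.continuousWithinAt (s := Set.Ioi (0:ℝ))
      simpa using this.tendsto
    apply ge_of_tendsto htend
    filter_upwards [Ioo_mem_nhdsGT_of_mem (Set.mem_Ico.mpr ⟨le_refl 0, hne⟩)] with η hη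
    exact key η hη.1 hη.2
  -- final bound
  have h14 : (1:ℝ)/4 ≤ (1 - PB)^2 := by nlinarith
  have hfin : lam / (1 - PB) ^ 2 * PB ≤ ε / 2 := by
    have h1 : lam / (1 - PB)^2 ≤ 4 * lam := by
      rw [div_le_iff₀ (by nlinarith)]
      nlinarith
    have h2 : lam / (1 - PB)^2 * PB ≤ 4 * lam * PB := by
      apply mul_le_mul_of_nonneg_right h1 hPB0
    have h3 : 4 * lam * PB ≤ 4 * (ρ * δ * α / 64) * q := by
      apply mul_le_mul (by nlinarith) hPBq hPB0 (by positivity)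
    have h4 : 4 * (ρ * δ * α / 64) * q = ε / 2 := by
      rw [hq]; field_simp; ring
    linarith
  linarith
end
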